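/- Let D be a strongly connected digraph on n vertices, not a directed cycle, such that for every pair of non-adjacent vertices x, y that have a common out-neighbour or a common in-neighbour, one has min{d⁺(x)+d⁻(y), d⁻(x)+d⁺(y)} ≥ n−1 and d(x)+d(y) ≥ 2n−1. Suppose D contains no cycle of length n−1 and no cycle of length n−2, and let C := x₁x₂…x_m x₁ be a longest non-Hamiltonian cycle of D (so 3 ≤ m ≤ n−3). If y is a vertex not on C such that x_m y and y x_{γ+1} are arcs of D (so x_m y x_{γ+1} is a C-bypass) and there are no arcs between y and any vertex of the subpath C[x₁, x_γ], then γ ≥ 3. -/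

import Mathlib

variable {V : Type*}

/-- Rotate an index of `Fin m` forward by `k` steps (indices mod `m`). -/
def finRot {m : ℕ} (i : Fin m) (k : ℕ) : Fin m :=
  ⟨(i.val + k) % m, Nat.mod_lt _ (Nat.lt_of_le_of_lt (Nat.zero_le i.val) i.isLt)⟩

/-- `c : Fin k → V` is a directed cycle of length `k`: distinct vertices with an
arc from each vertex to the next one (cyclically). -/
def IsCycle (A : V → V → Prop) {k : ℕ} (c : Fin k → V) : Prop :=
  Function.Injective c ∧ ∀ i, A (c i) (c (finRot i 1))

/-- Out-degree of `x`. -/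
def outDeg [Fintype V] (A : V → V → Prop) [DecidableRel A] (x : V) : ℕ :=
  (Finset.univ.filter fun y => A x y).card

/-- In-degree of `x`. -/
def inDeg [Fintype V] (A : V → V → Prop) [DecidableRel A] (x : V) : ℕ :=
  (Finset.univ.filter fun y => A y x).card

/-- Degree of `x`. -/
def deg [Fintype V] (A : V → V → Prop) [DecidableRel A] (x : V) : ℕ :=
  outDeg A x + inDeg A x

/-- Out-degree of `x` into the set `S`. -/
def outDegOn (A : V → V → Prop) [DecidableRel A] (x : V) (S : Finset V) : ℕ :=
  (S.filter fun y => A x y).card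

/-- In-degree of `x` from the set `S`. -/
def inDegOn (A : V → V → Prop) [DecidableRel A] (x : V) (S : Finset V) : ℕ :=
  (S.filter fun y => A y x).card

/-- Degree of `x` with respect to the set `S`. -/
def degOn (A : V → V → Prop) [DecidableRel A] (x : V) (S : Finset V) : ℕ :=
  outDegOn A x S + inDegOn A x S

/-- The set of indices of the subpath of a cycle on `Fin m` that goes from
index `β` to index `α` (inclusive), following the orientation of the cycle. -/
def cycSeg {m : ℕ} (β α : Fin m) : Finset (Fin m) :=
  (Finset.range ((α.val + m - β.val) % m + 1)).image (finRot β)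

namespace C3

/-! ### Lists as cycles -/

section Lists
variable (A : V → V → Prop)

lemma isCycle_of_list (l : List V) (h0 : l ≠ [])
    (hnd : l.Nodup) (hch : l.Chain' A)
    (hwrap : A (l.getLast h0) (l.head h0)) :
    IsCycle A l.get := by
  refine ⟨List.nodup_iff_injective_get.1 hnd, ?_⟩
  intro i
  have hlt := i.isLt
  by_cases hi : (i : ℕ) + 1 < l.length
  · have h1 : finRot i 1 = ⟨(i:ℕ)+1, hi⟩ := by
      simp only [finRot, Fin.mk.injEq]
      exact Nat.mod_eq_of_lt hi
    rw [h1]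
    exact List.isChain_iff_getElem.1 hch i (by omega)
  · have hieq : (i : ℕ) + 1 = l.length := by omega
    have h1 : finRot i 1 = ⟨0, by omega⟩ := by
      simp only [finRot, Fin.mk.injEq, hieq]
      exact Nat.mod_self _
    have h2 : i = ⟨l.length - 1, by omega⟩ := by
      apply Fin.ext; simp; omega
    have h3 : l.get i = l.getLast h0 := by
      rw [List.getLast_eq_getElem, h2]; rfl
    rw [h1, h3, List.get_mk_zero]
    exact hwrap

def segf (f : ℕ → V) (a k : ℕ) : List V := (List.range k).map fun j => f (a + j)

lemma segf_length (f : ℕ → V) (a k : ℕ) : (segf f a k).length = k := by simp [segf]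

lemma mem_segf {f : ℕ → V} {a k : ℕ} {v : V} :
    v ∈ segf f a k ↔ ∃ j, j < k ∧ f (a + j) = v := by
  simp only [segf, List.mem_map, List.mem_range]

lemma segf_ne_nil (f : ℕ → V) (a : ℕ) {k : ℕ} (hk : k ≠ 0) : segf f a k ≠ [] := by
  intro h
  have := segf_length f a k
  rw [h] at this
  simp at this
  omega

lemma head_segf (f : ℕ → V) (a : ℕ) {k : ℕ} (hk : k ≠ 0) (h : segf f a k ≠ []) :
    (segf f a k).head h = f a := by
  cases k with
  | zero => omega
  | succ k => simp [segf, List.range_succ_eq_map]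

lemma getLast_segf (f : ℕ → V) (a : ℕ) {k : ℕ} (hk : k ≠ 0) (h : segf f a k ≠ []) :
    (segf f a k).getLast h = f (a + (k - 1)) := by
  cases k with
  | zero => omega
  | succ k =>
    simp only [segf, List.range_succ]
    simp

lemma get_segf (f : ℕ → V) (a k : ℕ) (i : Fin (segf f a k).length) :
    (segf f a k).get i = f (a + i.val) := by
  simp only [List.get_eq_getElem]; simp [segf]

lemma chain'_segf {A : V → V → Prop} {f : ℕ → V} (harc : ∀ t, A (f t) (f (t + 1)))
    (a k : ℕ) : (segf f a k).Chain' A := by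
  rw [List.Chain', List.isChain_iff_getElem]
  intro i h
  simp only [segf, List.getElem_map, List.getElem_range]
  have : a + (i + 1) = (a + i) + 1 := by omega
  rw [this]
  exact harc _

lemma nodup_segf {m : ℕ} {f : ℕ → V} (hper : ∀ s t, f s = f t → s % m = t % m)
    (a : ℕ) {k : ℕ} (hk : k ≤ m) : (segf f a k).Nodup := by
  rw [List.nodup_iff_injective_get]
  intro i j hij
  rw [get_segf, get_segf] at hij
  have h1 : (a + i.val) % m = (a + j.val) % m := hper _ _ hij
  have hi : (i : ℕ) < k := by simpa [segf_length] using i.isLt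
  have hj : (j : ℕ) < k := by simpa [segf_length] using j.isLt
  have h2 : (i : ℕ) ≡ (j : ℕ) [MOD m] := Nat.ModEq.add_left_cancel' a h1
  have h3 : (i : ℕ) % m = (j : ℕ) % m := h2
  rw [Nat.mod_eq_of_lt (by omega), Nat.mod_eq_of_lt (by omega)] at h3
  exact Fin.ext h3

/-- A nonempty path: chain of arcs from `u` to `v` along `l`. -/
def GP (l : List V) (u v : V) : Prop :=
  ∃ h : l ≠ [], l.Chain' A ∧ l.head h = u ∧ l.getLast h = v

variable {A}

lemma GP.single (A : V → V → Prop) (u : V) : GP A [u] u u := ⟨by simp, List.isChain_singleton u, rfl, rfl⟩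

lemma GP.append {l1 l2 : List V} {u v w x : V} (h1 : GP A l1 u v) (h2 : GP A l2 w x)
    (hvw : A v w) : GP A (l1 ++ l2) u x := by
  obtain ⟨n1, c1, hh1, hl1⟩ := h1
  obtain ⟨n2, c2, hh2, hl2⟩ := h2
  refine ⟨by simp [n1], ?_, ?_, ?_⟩
  · rw [List.Chain', List.isChain_append]
    refine ⟨c1, c2, ?_⟩
    intro a ha b hb
    rw [List.getLast?_eq_getLast n1] at ha
    rw [List.head?_eq_head n2] at hb
    simp at ha hb
    rw [← ha, ← hb, hl1, hh2]
    exact hvw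
  · rw [List.head_append_left n1, hh1]
  · rw [List.getLast_append_of_ne_nil _ n2, hl2]

lemma GP.segf' {A : V → V → Prop} {f : ℕ → V} (harc : ∀ t, A (f t) (f (t + 1)))
    (a : ℕ) {k : ℕ} (hk : k ≠ 0) : GP A (segf f a k) (f a) (f (a + (k - 1))) :=
  ⟨segf_ne_nil f a hk, chain'_segf harc a k, head_segf f a hk _, getLast_segf f a hk _⟩

lemma nodup_append' {l1 l2 : List V} (h1 : l1.Nodup) (h2 : l2.Nodup)
    (h : ∀ x ∈ l1, x ∉ l2) : (l1 ++ l2).Nodup :=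
  List.nodup_append.2 ⟨h1, h2, fun a ha b hb hab => h a ha (hab ▸ hb)⟩

lemma false_of_GP {n m : ℕ}
    (hlongest : ∀ (k : ℕ) (d : Fin k → V), k < n → IsCycle A d → k ≤ m)
    {l : List V} {u v : V} (h : GP A l u v) (hclose : A v u) (hnd : l.Nodup)
    (hgt : m < l.length) (hlt : l.length < n) : False := by
  obtain ⟨h0, hch, hh, hl⟩ := h
  have : IsCycle A l.get := isCycle_of_list A l h0 hnd hch (by rw [hh, hl]; exact hclose)
  have := hlongest l.length l.get hlt this
  omega

end Lists

/-! ### The cyclic vertex function -/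

def ccf {m : ℕ} (hm0 : 0 < m) (c : Fin m → V) : ℕ → V :=
  fun k => c ⟨k % m, Nat.mod_lt _ hm0⟩

section CCF
variable {m : ℕ} (hm0 : 0 < m) (c : Fin m → V)

lemma ccf_eq (k : ℕ) (h : k < m) : ccf hm0 c k = c ⟨k, h⟩ :=
  congrArg c (Fin.ext (Nat.mod_eq_of_lt h))

lemma ccf_per {s t : ℕ} (h : s % m = t % m) : ccf hm0 c s = ccf hm0 c t :=
  congrArg c (Fin.ext h)

lemma ccf_mod (hcinj : Function.Injective c) {s t : ℕ}
    (h : ccf hm0 c s = ccf hm0 c t) : s % m = t % m :=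
  congrArg Fin.val (hcinj h)

lemma ccf_inj (hcinj : Function.Injective c) {s t : ℕ} (hs : s < m) (ht : t < m)
    (h : ccf hm0 c s = ccf hm0 c t) : s = t := by
  have := ccf_mod hm0 c hcinj h
  rwa [Nat.mod_eq_of_lt hs, Nat.mod_eq_of_lt ht] at this

lemma ccf_arc {A : V → V → Prop} (hc : IsCycle A c) (hm1 : 1 < m) (t : ℕ) :
    A (ccf hm0 c t) (ccf hm0 c (t + 1)) := by
  have h := hc.2 ⟨t % m, Nat.mod_lt _ hm0⟩
  have h2 : ccf hm0 c (t + 1) = c (finRot ⟨t % m, Nat.mod_lt _ hm0⟩ 1) := by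
    apply congrArg c
    apply Fin.ext
    show (t + 1) % m = (t % m + 1) % m
    conv_lhs => rw [Nat.add_mod]
    rw [Nat.mod_eq_of_lt hm1]
  rw [h2]
  exact h

lemma v_notmem_segf {v : V} (hv : ∀ s, v ≠ ccf hm0 c s) (a k : ℕ) :
    v ∉ segf (ccf hm0 c) a k := by
  rw [mem_segf]
  rintro ⟨j, _, hj⟩
  exact hv _ hj.symm

lemma cc_notmem_segf (hcinj : Function.Injective c) {t a k : ℕ} (ht : t < a)
    (h : a + k ≤ m) : ccf hm0 c t ∉ segf (ccf hm0 c) a k := by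
  rw [mem_segf]
  rintro ⟨j, hj, hj2⟩
  have := ccf_inj hm0 c hcinj (by omega) (by omega) hj2
  omega

lemma segf_disjoint (hcinj : Function.Injective c) {a k b l : ℕ} (h1 : a + k ≤ b)
    (h2 : b + l ≤ m) : ∀ x ∈ segf (ccf hm0 c) a k, x ∉ segf (ccf hm0 c) b l := by
  intro x hx hx2
  rw [mem_segf] at hx hx2
  obtain ⟨j1, hj1, e1⟩ := hx
  obtain ⟨j2, hj2, e2⟩ := hx2
  have := ccf_inj hm0 c hcinj (show a + j1 < m by omega) (by omega) (e1.trans e2.symm)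
  omega

lemma nodup_segf_cc (hcinj : Function.Injective c) (a : ℕ) {k : ℕ} (hk : k ≤ m) :
    (segf (ccf hm0 c) a k).Nodup :=
  nodup_segf (fun s t h => ccf_mod hm0 c hcinj h) a hk

end CCF

/-! ### Counting lemmas -/

lemma card_IO_bound (D E S : Finset ℕ) (σ : ℕ → ℕ)
    (hσ : Set.InjOn σ D) (himg : ∀ t ∈ D, σ t ∈ S) (hE : E ⊆ S)
    (hdisj : ∀ t ∈ D, σ t ∉ E) : D.card + E.card ≤ S.card := by
  have h1 : (D.image σ).card = D.card := Finset.card_image_of_injOn hσ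
  have h2 : Disjoint (D.image σ) E := by
    rw [Finset.disjoint_left]
    rintro x hx hxe
    obtain ⟨t, ht, rfl⟩ := Finset.mem_image.1 hx
    exact hdisj t ht hxe
  calc D.card + E.card = (D.image σ ∪ E).card := by
        rw [Finset.card_union_of_disjoint h2, h1]
    _ ≤ S.card := Finset.card_le_card (by
        intro x hx
        rcases Finset.mem_union.1 hx with h | h
        · obtain ⟨t, ht, rfl⟩ := Finset.mem_image.1 h
          exact himg t ht
        · exact hE h)

lemma mod_succ_eq {m : ℕ} (t : ℕ) (ht : t < m) :
    (t + 1) % m = if t + 1 = m then 0 else t + 1 := by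
  split
  · simp [*, Nat.mod_self]
  · exact Nat.mod_eq_of_lt (by omega)


section Counting
variable [Fintype V] [DecidableEq V] (A : V → V → Prop) [DecidableRel A]
variable {m : ℕ} (hm0 : 0 < m) (c : Fin m → V)

lemma ybound1 (y : V)
    (rule : ∀ t : ℕ, ¬(A (ccf hm0 c t) y ∧ A y (ccf hm0 c (t + 1)))) :
    ((Finset.range m).filter fun t => A y (ccf hm0 c t)).card
      + ((Finset.range m).filter fun t => A (ccf hm0 c t) y).card ≤ m := by
  rw [add_comm]
  have := card_IO_bound ((Finset.range m).filter fun t => A (ccf hm0 c t) y)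
      ((Finset.range m).filter fun t => A y (ccf hm0 c t)) (Finset.range m)
      (fun t => (t + 1) % m) ?_ ?_ (Finset.filter_subset _ _) ?_
  · simpa using this
  · intro s hs t ht h
    simp only [Finset.coe_filter, Set.mem_setOf_eq, Finset.mem_range] at hs ht
    have h' : (s + 1) % m = (t + 1) % m := h
    rw [mod_succ_eq s hs.1, mod_succ_eq t ht.1] at h'
    split at h' <;> split at h' <;> omega
  · intro t ht
    simp only [Finset.mem_range]
    exact Nat.mod_lt _ hm0
  · intro t ht h
    simp only [Finset.mem_filter, Finset.mem_range] at ht h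
    have harc : A y (ccf hm0 c (t + 1)) := by
      have he : ccf hm0 c ((t + 1) % m) = ccf hm0 c (t + 1) :=
        ccf_per hm0 c (Nat.mod_mod (t + 1) m)
      rw [← he]; exact h.2
    exact rule t ⟨ht.2, harc⟩

lemma ybound2 (y : V) (hm1 : 1 < m)
    (rule : ∀ t : ℕ, ¬(A (ccf hm0 c t) y ∧ A y (ccf hm0 c (t + 1))))
    (h0 : ¬ A (ccf hm0 c 0) y) (h1 : ¬ A y (ccf hm0 c 1)) :
    ((Finset.range m).filter fun t => A y (ccf hm0 c t)).card
      + ((Finset.range m).filter fun t => A (ccf hm0 c t) y).card ≤ m - 1 := by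
  rw [add_comm]
  have := card_IO_bound ((Finset.range m).filter fun t => A (ccf hm0 c t) y)
      ((Finset.range m).filter fun t => A y (ccf hm0 c t)) ((Finset.range m).erase 1)
      (fun t => (t + 1) % m) ?_ ?_ ?_ ?_
  · have hcard : ((Finset.range m).erase 1).card = m - 1 := by
      rw [Finset.card_erase_of_mem (by simp [hm1]), Finset.card_range]
    omega
  · intro s hs t ht h
    simp only [Finset.coe_filter, Set.mem_setOf_eq, Finset.mem_range] at hs ht
    have h' : (s + 1) % m = (t + 1) % m := h
    rw [mod_succ_eq s hs.1, mod_succ_eq t ht.1] at h'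
    split at h' <;> split at h' <;> omega
  · intro t ht
    simp only [Finset.mem_filter, Finset.mem_range] at ht
    simp only [Finset.mem_erase, Finset.mem_range]
    refine ⟨?_, Nat.mod_lt _ hm0⟩
    rw [mod_succ_eq t ht.1]
    split
    · omega
    · intro hh
      have ht0 : t = 0 := by omega
      rw [ht0] at ht
      exact h0 ht.2
  · intro t ht
    simp only [Finset.mem_filter, Finset.mem_range] at ht
    simp only [Finset.mem_erase, Finset.mem_range]
    refine ⟨?_, ht.1⟩
    intro hh
    rw [hh] at ht
    exact h1 ht.2
  · intro t ht h
    simp only [Finset.mem_filter, Finset.mem_range] at ht h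
    have harc : A y (ccf hm0 c (t + 1)) := by
      have he : ccf hm0 c ((t + 1) % m) = ccf hm0 c (t + 1) :=
        ccf_per hm0 c (Nat.mod_mod (t + 1) m)
      rw [← he]; exact h.2
    exact rule t ⟨ht.2, harc⟩

lemma gbound (hirr : ∀ v : V, ¬ A v v) (hcinj : Function.Injective c)
    (g a : ℕ) (hga : g < a) (ham : a + 2 ≤ m)
    (rule : ∀ i : ℕ, a ≤ i → i ≤ m - 2 →
      ¬(A (ccf hm0 c i) (ccf hm0 c g) ∧ A (ccf hm0 c g) (ccf hm0 c (i + 1)))) :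
    ((Finset.range m).filter fun t => A (ccf hm0 c g) (ccf hm0 c t)).card
      + ((Finset.range m).filter fun t => A (ccf hm0 c t) (ccf hm0 c g)).card
      ≤ m + a - 1 := by
  set Q := ccf hm0 c with hQ
  set I := (Finset.range m).filter fun t => A (Q t) (Q g) with hI
  set O := (Finset.range m).filter fun t => A (Q g) (Q t) with hO
  set D := I.filter (fun t => a ≤ t ∧ t ≤ m - 2) with hD
  set E := O.filter (fun t => a + 1 ≤ t) with hE
  have hIsplit : D.card + (I.filter fun t => ¬(a ≤ t ∧ t ≤ m - 2)).card = I.card :=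
    Finset.card_filter_add_card_filter_not _
  have hOsplit : E.card + (O.filter fun t => ¬(a + 1 ≤ t)).card = O.card :=
    Finset.card_filter_add_card_filter_not _
  have hcore : D.card + E.card ≤ (Finset.Ico (a + 1) m).card := by
    apply card_IO_bound D E _ (fun t => t + 1)
    · intro s _ t _ h
      simpa using h
    · intro t ht
      simp only [hD, Finset.mem_filter, Finset.mem_range] at ht
      simp only [Finset.mem_Ico]
      omega
    · intro t ht
      simp only [hE, hO, Finset.mem_filter, Finset.mem_range] at ht
      simp only [Finset.mem_Ico]
      omega
    · intro t ht hmem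
      simp only [hD, hI, Finset.mem_filter, Finset.mem_range] at ht
      simp only [hE, hO, Finset.mem_filter, Finset.mem_range] at hmem
      exact rule t ht.2.1 ht.2.2 ⟨ht.1.2, hmem.1.2⟩
  have hIco : (Finset.Ico (a + 1) m).card = m - (a + 1) := Nat.card_Ico _ _
  have hI' : (I.filter fun t => ¬(a ≤ t ∧ t ≤ m - 2)).card ≤ a := by
    have hsub : (I.filter fun t => ¬(a ≤ t ∧ t ≤ m - 2)) ⊆
        (Finset.range a ∪ {m - 1}).erase g := by
      intro t ht
      simp only [hI, Finset.mem_filter, Finset.mem_range] at ht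
      have htg : t ≠ g := by
        intro h
        rw [h] at ht
        exact hirr _ ht.1.2
      simp only [Finset.mem_erase, Finset.mem_union, Finset.mem_range,
        Finset.mem_singleton]
      omega
    calc (I.filter fun t => ¬(a ≤ t ∧ t ≤ m - 2)).card
        ≤ ((Finset.range a ∪ {m - 1}).erase g).card := Finset.card_le_card hsub
      _ = (Finset.range a ∪ {m - 1}).card - 1 :=
          Finset.card_erase_of_mem (by
            simp only [Finset.mem_erase, Finset.mem_union, Finset.mem_range,
              Finset.mem_singleton]
            omega)
      _ ≤ a + 1 - 1 := by
          have := Finset.card_union_le (Finset.range a) ({m - 1} : Finset ℕ)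
          simp only [Finset.card_range, Finset.card_singleton] at this
          omega
      _ = a := by omega
  have hO' : (O.filter fun t => ¬(a + 1 ≤ t)).card ≤ a := by
    have hsub : (O.filter fun t => ¬(a + 1 ≤ t)) ⊆ (Finset.range (a + 1)).erase g := by
      intro t ht
      simp only [hO, Finset.mem_filter, Finset.mem_range] at ht
      have htg : t ≠ g := by
        intro h
        rw [h] at ht
        exact hirr _ ht.1.2
      simp only [Finset.mem_erase, Finset.mem_range]
      omega
    calc (O.filter fun t => ¬(a + 1 ≤ t)).card
        ≤ ((Finset.range (a + 1)).erase g).card := Finset.card_le_card hsub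
      _ = a := by
          rw [Finset.card_erase_of_mem (by simp; omega), Finset.card_range]
          omega
  omega

lemma degOn_pair_bound (u w : V) (R : Finset V)
    (hforb : ∀ r ∈ R, ¬(A u r ∧ A r w) ∧ ¬(A w r ∧ A r u)) :
    degOn A u R + degOn A w R ≤ 2 * R.card := by
  unfold degOn outDegOn inDegOn
  rw [Finset.card_filter, Finset.card_filter, Finset.card_filter, Finset.card_filter]
  have : ∀ r ∈ R,
      ((if A u r then 1 else 0) + (if A r u then 1 else 0))
        + ((if A w r then 1 else 0) + (if A r w then 1 else 0)) ≤ 2 := by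
    intro r hr
    obtain ⟨f1, f2⟩ := hforb r hr
    have e1 : (if A u r then 1 else 0) + (if A r w then 1 else 0) ≤ 1 := by
      by_cases h1 : A u r
      · by_cases h4 : A r w
        · exact absurd ⟨h1, h4⟩ f1
        · simp [h1, h4]
      · by_cases h4 : A r w <;> simp [h1, h4]
    have e2 : (if A w r then 1 else 0) + (if A r u then 1 else 0) ≤ 1 := by
      by_cases h3 : A w r
      · by_cases h2 : A r u
        · exact absurd ⟨h3, h2⟩ f2
        · simp [h3, h2]
      · by_cases h2 : A r u <;> simp [h3, h2]
    omega
  calc (∑ r ∈ R, if A u r then 1 else 0) + (∑ r ∈ R, if A r u then 1 else 0)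
        + ((∑ r ∈ R, if A w r then 1 else 0) + (∑ r ∈ R, if A r w then 1 else 0))
      = ∑ r ∈ R, (((if A u r then 1 else 0) + (if A r u then 1 else 0))
          + ((if A w r then 1 else 0) + (if A r w then 1 else 0))) := by
        rw [← Finset.sum_add_distrib, ← Finset.sum_add_distrib, ← Finset.sum_add_distrib]
    _ ≤ ∑ _r ∈ R, 2 := Finset.sum_le_sum this
    _ = 2 * R.card := by rw [Finset.sum_const, smul_eq_mul, mul_comm]

lemma final_count (hirr : ∀ v : V, ¬ A v v) {n : ℕ} (hn : n = Fintype.card V)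
    (hm3 : m + 3 ≤ n) (hcinj : Function.Injective c)
    (y : V) (hy : ∀ s, y ≠ ccf hm0 c s) (g : ℕ)
    (hnadj1 : ¬ A y (ccf hm0 c g)) (hnadj2 : ¬ A (ccf hm0 c g) y)
    (hdeg : 2 * n - 1 ≤ deg A y + deg A (ccf hm0 c g))
    (By Bg : ℕ) (hBsum : By + Bg ≤ 2 * m)
    (hyB : ((Finset.range m).filter fun t => A y (ccf hm0 c t)).card
      + ((Finset.range m).filter fun t => A (ccf hm0 c t) y).card ≤ By)
    (hgB : ((Finset.range m).filter fun t => A (ccf hm0 c g) (ccf hm0 c t)).card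
      + ((Finset.range m).filter fun t => A (ccf hm0 c t) (ccf hm0 c g)).card ≤ Bg)
    (hforb : ∀ r : V, r ≠ y → (∀ s, r ≠ ccf hm0 c s) →
      ¬(A y r ∧ A r (ccf hm0 c g)) ∧ ¬(A (ccf hm0 c g) r ∧ A r y)) : False := by
  classical
  set Q := ccf hm0 c with hQ
  set Cset := (Finset.range m).image Q with hCdef
  have hQmem : ∀ s, Q s ∈ Cset := by
    intro s
    rw [hCdef]
    refine Finset.mem_image.2 ⟨s % m, Finset.mem_range.2 (Nat.mod_lt _ hm0), ?_⟩
    exact ccf_per hm0 c (Nat.mod_mod _ _)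
  have hyCset : y ∉ Cset := by
    intro h
    obtain ⟨t, _, ht⟩ := Finset.mem_image.1 h
    exact hy t ht.symm
  have hCcard : Cset.card = m := by
    rw [hCdef, Finset.card_image_of_injOn, Finset.card_range]
    intro s hs t ht h
    simp only [Finset.coe_range, Set.mem_Iio] at hs ht
    exact ccf_inj hm0 c hcinj hs ht h
  set Rset := Finset.univ \ insert y Cset with hRdef
  have hRcard : Rset.card = n - (m + 1) := by
    rw [hRdef, Finset.card_sdiff_of_subset (Finset.subset_univ _),
      Finset.card_insert_of_notMem hyCset, hCcard, Finset.card_univ, hn]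
  have hadd : ∀ (x : V) (S T : Finset V), Disjoint S T →
      degOn A x (S ∪ T) = degOn A x S + degOn A x T := by
    intro x S T hST
    unfold degOn outDegOn inDegOn
    rw [Finset.filter_union, Finset.filter_union,
      Finset.card_union_of_disjoint (Finset.disjoint_filter_filter hST),
      Finset.card_union_of_disjoint (Finset.disjoint_filter_filter hST)]
    omega
  have hU : Cset ∪ ({y} ∪ Rset) = Finset.univ := by
    ext z
    simp only [Finset.mem_union, Finset.mem_singleton, hRdef, Finset.mem_sdiff,
      Finset.mem_univ, Finset.mem_insert, true_and, iff_true]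
    tauto
  have disj2 : Disjoint ({y} : Finset V) Rset := by
    rw [Finset.disjoint_left]
    intro z hz
    rw [Finset.mem_singleton] at hz
    subst hz
    simp [hRdef]
  have disj1 : Disjoint Cset ({y} ∪ Rset) := by
    rw [Finset.disjoint_left]
    intro z hz hz2
    rcases Finset.mem_union.1 hz2 with h | h
    · rw [Finset.mem_singleton] at h
      subst h
      exact hyCset hz
    · rw [hRdef, Finset.mem_sdiff] at h
      exact h.2 (Finset.mem_insert_of_mem hz)
  have hsplit : ∀ x : V, deg A x = degOn A x Cset + (degOn A x {y} + degOn A x Rset) := by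
    intro x
    have h0 : deg A x = degOn A x Finset.univ := rfl
    rw [h0, ← hU, hadd _ _ _ disj1, hadd _ _ _ disj2]
  have hyy : degOn A y {y} = 0 := by
    simp [degOn, outDegOn, inDegOn, Finset.filter_singleton, hirr y]
  have hgy : degOn A (Q g) {y} = 0 := by
    simp [degOn, outDegOn, inDegOn, Finset.filter_singleton, hnadj1, hnadj2]
  have hCfilter : ∀ (P : V → Prop) (_ : DecidablePred P),
      (Cset.filter P).card = ((Finset.range m).filter fun t => P (Q t)).card := by
    intro P instP
    have himg : Cset.filter P = ((Finset.range m).filter fun t => P (Q t)).image Q := by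
      ext z
      simp only [Finset.mem_filter, Finset.mem_image, hCdef, Finset.mem_range]
      constructor
      · rintro ⟨⟨t, ht, rfl⟩, hz⟩
        exact ⟨t, ⟨ht, hz⟩, rfl⟩
      · rintro ⟨t, ⟨ht, hPz⟩, rfl⟩
        exact ⟨⟨t, ht, rfl⟩, hPz⟩
    rw [himg, Finset.card_image_of_injOn]
    intro s hs t ht h
    simp only [Finset.coe_filter, Set.mem_setOf_eq, Finset.mem_range] at hs ht
    exact ccf_inj hm0 c hcinj hs.1 ht.1 h
  have hyCdeg : degOn A y Cset ≤ By := by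
    unfold degOn outDegOn inDegOn
    rw [hCfilter _ inferInstance, hCfilter _ inferInstance]
    exact hyB
  have hgCdeg : degOn A (Q g) Cset ≤ Bg := by
    unfold degOn outDegOn inDegOn
    rw [hCfilter _ inferInstance, hCfilter _ inferInstance]
    exact hgB
  have hRbound : degOn A y Rset + degOn A (Q g) Rset ≤ 2 * Rset.card := by
    apply degOn_pair_bound
    intro r hr
    rw [hRdef, Finset.mem_sdiff] at hr
    have hr1 : r ≠ y := fun h => hr.2 (h ▸ Finset.mem_insert_self y Cset)
    have hr2 : ∀ s, r ≠ Q s := by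
      intro s h
      exact hr.2 (Finset.mem_insert_of_mem (h ▸ hQmem s))
    exact hforb r hr1 hr2
  have h1 := hsplit y
  have h2 := hsplit (Q g)
  omega

end Counting

end C3

/-- Claim 3. Under the hypotheses of the main theorem, with `C` a
longest non-Hamiltonian cycle (so `3 ≤ m ≤ n-3`), if `x_m y x_{γ+1}` is a `C`-bypass
and there are no arcs between `y` and `C[x₁, x_γ]`, then `γ ≥ 3`. -/
theorem claim3_gap_ge_three
    [Fintype V] [DecidableEq V] (A : V → V → Prop) [DecidableRel A]
    (hirr : ∀ v : V, ¬ A v v)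
    (n : ℕ) (hn : n = Fintype.card V)
    (hstrong : ∀ u v : V, u ≠ v → Relation.TransGen A u v)
    (hnotdircycle : ¬ ∃ c : Fin n → V, Function.Bijective c ∧
      ∀ x y : V, A x y ↔ ∃ i : Fin n, x = c i ∧ y = c (finRot i 1))
    (hcond : ∀ x y : V, x ≠ y → ¬ A x y → ¬ A y x →
      (∃ z : V, (A x z ∧ A y z) ∨ (A z x ∧ A z y)) →
      n - 1 ≤ min (outDeg A x + inDeg A y) (inDeg A x + outDeg A y) ∧
      2 * n - 1 ≤ deg A x + deg A y)
    (hno1 : ¬ ∃ c : Fin (n - 1) → V, IsCycle A c)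
    (hno2 : ¬ ∃ c : Fin (n - 2) → V, IsCycle A c)
    (m : ℕ) (hm3 : 3 ≤ m) (hmn : m ≤ n - 3)
    (c : Fin m → V) (hc : IsCycle A c)
    (hlongest : ∀ (k : ℕ) (d : Fin k → V), k < n → IsCycle A d → k ≤ m)
    (y : V) (hy : ∀ i : Fin m, y ≠ c i)
    (γ : ℕ) (hγ1 : 1 ≤ γ) (hγ2 : γ + 2 ≤ m)
    (hmy : A (c ⟨m - 1, by omega⟩) y)
    (hyγ : A y (c ⟨γ, by omega⟩))
    (hnoarc : ∀ k : ℕ, (hk : k < γ) → ¬ A y (c ⟨k, by omega⟩) ∧ ¬ A (c ⟨k, by omega⟩) y) :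
    3 ≤ γ := by
  by_contra hcon
  push_neg at hcon
  have hm0 : 0 < m := by omega
  have hm1 : 1 < m := by omega
  have hn6 : m + 3 ≤ n := by omega
  have hcinj : Function.Injective c := hc.1
  set Q := C3.ccf hm0 c with hQ
  have harc : ∀ t : ℕ, A (Q t) (Q (t + 1)) := C3.ccf_arc hm0 c hc hm1
  have hQper : ∀ {s t : ℕ}, s % m = t % m → Q s = Q t := by
    intro s t h; rw [hQ]; exact C3.ccf_per hm0 c h
  have hQinj : ∀ {s t : ℕ}, s < m → t < m → Q s = Q t → s = t := by
    intro s t hs ht h; rw [hQ] at h; exact C3.ccf_inj hm0 c hcinj hs ht h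
  have hQeq : ∀ (k : ℕ) (h : k < m), Q k = c ⟨k, h⟩ := by
    intro k h; rw [hQ]; exact C3.ccf_eq hm0 c k h
  have hyQ : ∀ s, y ≠ Q s := by
    intro s; rw [hQ]; exact hy _
  have hmy' : A (Q (m - 1)) y := by rw [hQeq (m - 1) (by omega)]; exact hmy
  have hyγ' : A y (Q γ) := by rw [hQeq γ (by omega)]; exact hyγ
  have hno' : ∀ k, k < γ → ¬ A y (Q k) ∧ ¬ A (Q k) y := by
    intro k hk
    rw [hQeq k (by omega)]
    exact hnoarc k hk
  have harcm : A (Q (m - 1)) (Q 0) := by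
    have e : Q (m - 1 + 1) = Q 0 := by
      apply hQper
      rw [show m - 1 + 1 = m by omega, Nat.mod_self, Nat.zero_mod]
    rw [← e]; exact harc (m - 1)
  -- membership helpers
  have hyseg : ∀ a k, y ∉ C3.segf Q a k := by
    intro a k; rw [hQ]; exact C3.v_notmem_segf hm0 c (by rw [← hQ]; exact hyQ) a k
  have hccseg : ∀ {t a k : ℕ}, t < a → a + k ≤ m → Q t ∉ C3.segf Q a k := by
    intro t a k ht h; rw [hQ]; exact C3.cc_notmem_segf hm0 c hcinj ht h
  have hsegdisj : ∀ {a k b l : ℕ}, a + k ≤ b → b + l ≤ m →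
      ∀ x ∈ C3.segf Q a k, x ∉ C3.segf Q b l := by
    intro a k b l h1 h2; rw [hQ]; exact C3.segf_disjoint hm0 c hcinj h1 h2
  have snod : ∀ (a : ℕ) {k : ℕ}, k ≤ m → (C3.segf Q a k).Nodup := by
    intro a k hk; rw [hQ]; exact C3.nodup_segf_cc hm0 c hcinj a hk
  have hrseg : ∀ {r : V}, (∀ s, r ≠ Q s) → ∀ a k, r ∉ C3.segf Q a k := by
    intro r hr a k; rw [hQ]; exact C3.v_notmem_segf hm0 c (by rw [← hQ]; exact hr) a k
  -- Rule Y : no insertion of y into C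
  have ruleY : ∀ i : ℕ, A (Q i) y → A y (Q (i + 1)) → False := by
    intro i h1 h2
    have gp1 : C3.GP A (C3.segf Q (i + 1) m) (Q (i + 1)) (Q (i + 1 + (m - 1))) :=
      C3.GP.segf' harc (i + 1) (by omega)
    have e1 : Q (i + 1 + (m - 1)) = Q i := by
      apply hQper
      rw [show i + 1 + (m - 1) = i + m by omega]
      exact Nat.add_mod_right i m
    have h1' : A (Q (i + 1 + (m - 1))) y := by rw [e1]; exact h1
    have gp : C3.GP A (C3.segf Q (i + 1) m ++ [y]) (Q (i + 1)) y :=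
      gp1.append (C3.GP.single A y) h1'
    refine C3.false_of_GP hlongest gp h2 ?_ ?_ ?_
    · refine C3.nodup_append' (snod _ le_rfl) (List.nodup_singleton y) ?_
      intro x hx
      simp only [List.mem_singleton]
      rw [C3.mem_segf] at hx
      obtain ⟨j, _, rfl⟩ := hx
      exact (hyQ _).symm
    · simp only [List.length_append, C3.segf_length, List.length_singleton,
          List.length_cons, List.length_nil]; omega
    · simp only [List.length_append, C3.segf_length, List.length_singleton,
          List.length_cons, List.length_nil]; omega
  -- forbidden: y → r → x₁  (cycle of length m+2)
  have forbA : ∀ r : V, (∀ s, r ≠ Q s) → r ≠ y → A y r → A r (Q 0) → False := by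
    intro r hr hry h1 h2
    have gp1 : C3.GP A (C3.segf Q 0 m) (Q 0) (Q (0 + (m - 1))) :=
      C3.GP.segf' harc 0 (by omega)
    have hmy2 : A (Q (0 + (m - 1))) y := by
      rw [show 0 + (m - 1) = m - 1 by omega]; exact hmy'
    have gp2 : C3.GP A (C3.segf Q 0 m ++ [y]) (Q 0) y :=
      gp1.append (C3.GP.single A y) hmy2
    have gp : C3.GP A (C3.segf Q 0 m ++ [y] ++ [r]) (Q 0) r :=
      gp2.append (C3.GP.single A r) h1
    refine C3.false_of_GP hlongest gp h2 ?_ ?_ ?_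
    · refine C3.nodup_append' (C3.nodup_append' (snod _ le_rfl)
        (List.nodup_singleton y) ?_) (List.nodup_singleton r) ?_
      · intro x hx
        simp only [List.mem_singleton]
        rw [C3.mem_segf] at hx
        obtain ⟨j, _, rfl⟩ := hx
        exact (hyQ _).symm
      · intro x hx
        simp only [List.mem_append, List.mem_singleton, C3.mem_segf] at hx
        simp only [List.mem_singleton]
        rcases hx with ⟨j, _, rfl⟩ | rfl
        · exact (hr _).symm
        · exact hry.symm
    · simp only [List.length_append, C3.segf_length, List.length_singleton,
          List.length_cons, List.length_nil]; omega
    · simp only [List.length_append, C3.segf_length, List.length_singleton,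
          List.length_cons, List.length_nil]; omega
  rcases (show γ = 1 ∨ γ = 2 by omega) with hγ | hγ
  · -- γ = 1
    rw [hγ] at hyγ'
    -- forbidden: x₁ → r → y (cycle of length m+2)
    have forbB1 : ∀ r : V, (∀ s, r ≠ Q s) → r ≠ y → A (Q 0) r → A r y → False := by
      intro r hr hry h1 h2
      have gp1 : C3.GP A (C3.segf Q 1 m) (Q 1) (Q (1 + (m - 1))) :=
        C3.GP.segf' harc 1 (by omega)
      have gp2 : C3.GP A ([y] ++ C3.segf Q 1 m) y (Q (1 + (m - 1))) :=
        (C3.GP.single A y).append gp1 hyγ'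
      have h1' : A (Q (1 + (m - 1))) r := by
        have e : Q (1 + (m - 1)) = Q 0 := by
          apply hQper
          rw [show 1 + (m - 1) = m by omega, Nat.mod_self, Nat.zero_mod]
        rw [e]; exact h1
      have gp : C3.GP A ([y] ++ C3.segf Q 1 m ++ [r]) y r :=
        gp2.append (C3.GP.single A r) h1'
      refine C3.false_of_GP hlongest gp h2 ?_ ?_ ?_
      · refine C3.nodup_append' (C3.nodup_append' (List.nodup_singleton y)
          (snod _ le_rfl) ?_) (List.nodup_singleton r) ?_
        · intro x hx
          rw [List.mem_singleton] at hx
          subst hx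
          exact hyseg _ _
        · intro x hx
          simp only [List.mem_append, List.mem_singleton, C3.mem_segf] at hx
          simp only [List.mem_singleton]
          rcases hx with rfl | ⟨j, _, rfl⟩
          · exact hry.symm
          · exact (hr _).symm
      · simp only [List.length_append, C3.segf_length, List.length_singleton,
          List.length_cons, List.length_nil]; omega
      · simp only [List.length_append, C3.segf_length, List.length_singleton,
          List.length_cons, List.length_nil]; omega
    -- no insertion of x₁ into C' (cycle of length m+1)
    have rule40 : ∀ i : ℕ, 1 ≤ i → i ≤ m - 2 →
        A (Q i) (Q 0) → A (Q 0) (Q (i + 1)) → False := by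
      intro i hi1 hi2 h1 h2
      have gp2 : C3.GP A ([y] ++ C3.segf Q 1 i) y (Q (1 + (i - 1))) :=
        (C3.GP.single A y).append (C3.GP.segf' harc 1 (by omega)) hyγ'
      have h1' : A (Q (1 + (i - 1))) (Q 0) := by
        rw [show 1 + (i - 1) = i by omega]; exact h1
      have gp3 : C3.GP A ([y] ++ C3.segf Q 1 i ++ [Q 0]) y (Q 0) :=
        gp2.append (C3.GP.single A (Q 0)) h1'
      have gp : C3.GP A ([y] ++ C3.segf Q 1 i ++ [Q 0] ++ C3.segf Q (i + 1) (m - 1 - i))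
          y (Q (i + 1 + (m - 1 - i - 1))) :=
        gp3.append (C3.GP.segf' harc (i + 1) (by omega)) h2
      have hclose : A (Q (i + 1 + (m - 1 - i - 1))) y := by
        rw [show i + 1 + (m - 1 - i - 1) = m - 1 by omega]; exact hmy'
      refine C3.false_of_GP hlongest gp hclose ?_ ?_ ?_
      · refine C3.nodup_append' (C3.nodup_append' (C3.nodup_append'
          (List.nodup_singleton y) (snod _ (by omega)) ?_)
          (List.nodup_singleton (Q 0)) ?_) (snod _ (by omega)) ?_
        · intro x hx
          rw [List.mem_singleton] at hx
          subst hx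
          exact hyseg _ _
        · intro x hx
          simp only [List.mem_append, List.mem_singleton, C3.mem_segf] at hx
          simp only [List.mem_singleton]
          rcases hx with rfl | ⟨j, hj, rfl⟩
          · exact hyQ 0
          · intro h
            have := hQinj (by omega) (by omega) h
            omega
        · intro x hx
          simp only [List.mem_append, List.mem_singleton, C3.mem_segf] at hx
          rcases hx with (rfl | ⟨j, hj, rfl⟩) | rfl
          · exact hyseg _ _
          · exact hsegdisj (by omega) (by omega) _ (C3.mem_segf.2 ⟨j, hj, rfl⟩)
          · exact hccseg (by omega) (by omega)
      · simp only [List.length_append, C3.segf_length, List.length_singleton,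
          List.length_cons, List.length_nil]; omega
      · simp only [List.length_append, C3.segf_length, List.length_singleton,
          List.length_cons, List.length_nil]; omega
    -- counting
    have hdeg : 2 * n - 1 ≤ deg A y + deg A (Q 0) :=
      (hcond y (Q 0) (hyQ 0) (hno' 0 (by omega)).1 (hno' 0 (by omega)).2
        ⟨Q (m - 1), Or.inr ⟨hmy', harcm⟩⟩).2
    have hyB := C3.ybound1 A hm0 c y (fun t h => ruleY t h.1 h.2)
    have hgB := C3.gbound A hm0 c hirr hcinj 0 1 (by omega) (by omega)
      (fun i hi1 hi2 h => rule40 i hi1 hi2 h.1 h.2)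
    exact C3.final_count A hm0 c hirr hn hn6 hcinj y hyQ 0
      (hno' 0 (by omega)).1 (hno' 0 (by omega)).2 hdeg m m (by omega)
      hyB (hgB.trans (by omega))
      (fun r hry hr => ⟨fun h => forbA r hr hry h.1 h.2,
        fun h => forbB1 r hr hry h.1 h.2⟩)
  · -- γ = 2
    have hm4 : 4 ≤ m := by omega
    have hyγ2 : A y (Q 2) := by rw [hγ] at hyγ'; exact hyγ'
    by_cases hJ0 : ∀ i : ℕ, 2 ≤ i → i ≤ m - 2 → ¬(A (Q i) (Q 0) ∧ A (Q 0) (Q (i + 1)))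
    · -- case: x₁ cannot be inserted anywhere; use the pair (y, x₁)
      have forbB2 : ∀ r : V, (∀ s, r ≠ Q s) → r ≠ y → A (Q 0) r → A r y → False := by
        intro r hr hry h1 h2
        have gp1 : C3.GP A ([y] ++ C3.segf Q 2 (m - 2)) y (Q (2 + (m - 2 - 1))) :=
          (C3.GP.single A y).append (C3.GP.segf' harc 2 (by omega)) hyγ2
        have e1 : A (Q (2 + (m - 2 - 1))) (Q 0) := by
          rw [show 2 + (m - 2 - 1) = m - 1 by omega]; exact harcm
        have gp2 : C3.GP A ([y] ++ C3.segf Q 2 (m - 2) ++ [Q 0]) y (Q 0) :=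
          gp1.append (C3.GP.single A (Q 0)) e1
        have gp : C3.GP A ([y] ++ C3.segf Q 2 (m - 2) ++ [Q 0] ++ [r]) y r :=
          gp2.append (C3.GP.single A r) h1
        refine C3.false_of_GP hlongest gp h2 ?_ ?_ ?_
        · refine C3.nodup_append' (C3.nodup_append' (C3.nodup_append'
            (List.nodup_singleton y) (snod _ (by omega)) ?_)
            (List.nodup_singleton (Q 0)) ?_) (List.nodup_singleton r) ?_
          · intro x hx
            rw [List.mem_singleton] at hx
            subst hx
            exact hyseg _ _
          · intro x hx
            simp only [List.mem_append, List.mem_singleton, C3.mem_segf] at hx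
            simp only [List.mem_singleton]
            rcases hx with rfl | ⟨j, hj, rfl⟩
            · exact hyQ 0
            · intro h
              have := hQinj (by omega) (by omega) h
              omega
          · intro x hx
            simp only [List.mem_append, List.mem_singleton, C3.mem_segf] at hx
            simp only [List.mem_singleton]
            rcases hx with (rfl | ⟨j, hj, rfl⟩) | rfl
            · exact hry.symm
            · exact (hr _).symm
            · exact (hr _).symm
        · simp only [List.length_append, C3.segf_length, List.length_singleton,
            List.length_cons, List.length_nil]; omega
        · simp only [List.length_append, C3.segf_length, List.length_singleton,
            List.length_cons, List.length_nil]; omega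
      have hdeg : 2 * n - 1 ≤ deg A y + deg A (Q 0) :=
        (hcond y (Q 0) (hyQ 0) (hno' 0 (by omega)).1 (hno' 0 (by omega)).2
          ⟨Q (m - 1), Or.inr ⟨hmy', harcm⟩⟩).2
      have hyB := C3.ybound2 A hm0 c y hm1 (fun t h => ruleY t h.1 h.2)
        (hno' 0 (by omega)).2 (hno' 1 (by omega)).1
      have hgB := C3.gbound A hm0 c hirr hcinj 0 2 (by omega) (by omega) hJ0
      exact C3.final_count A hm0 c hirr hn hn6 hcinj y hyQ 0
        (hno' 0 (by omega)).1 (hno' 0 (by omega)).2 hdeg (m - 1) (m + 1) (by omega)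
        hyB (hgB.trans (by omega))
        (fun r hry hr => ⟨fun h => forbA r hr hry h.1 h.2,
          fun h => forbB2 r hr hry h.1 h.2⟩)
    · -- case: x₁ can be inserted at position i; then x₂ cannot be inserted anywhere
      push_neg at hJ0
      obtain ⟨i, hi2, him, hAi1, hAi2⟩ := hJ0
      have hJ1 : ∀ j : ℕ, 2 ≤ j → j ≤ m - 2 →
          ¬(A (Q j) (Q 1) ∧ A (Q 1) (Q (j + 1))) := by
        rintro j hj2 hjm ⟨g1, g2⟩
        rcases lt_trichotomy i j with hij | hij | hij
        · -- i < j
          have gp1 : C3.GP A ([y] ++ C3.segf Q 2 (i - 1)) y (Q (2 + (i - 1 - 1))) :=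
            (C3.GP.single A y).append (C3.GP.segf' harc 2 (by omega)) hyγ2
          have e1 : A (Q (2 + (i - 1 - 1))) (Q 0) := by
            rw [show 2 + (i - 1 - 1) = i by omega]; exact hAi1
          have gp2 : C3.GP A ([y] ++ C3.segf Q 2 (i - 1) ++ [Q 0]) y (Q 0) :=
            gp1.append (C3.GP.single A (Q 0)) e1
          have gp3 : C3.GP A ([y] ++ C3.segf Q 2 (i - 1) ++ [Q 0] ++
              C3.segf Q (i + 1) (j - i)) y (Q (i + 1 + (j - i - 1))) :=
            gp2.append (C3.GP.segf' harc (i + 1) (by omega)) hAi2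
          have e2 : A (Q (i + 1 + (j - i - 1))) (Q 1) := by
            rw [show i + 1 + (j - i - 1) = j by omega]; exact g1
          have gp4 : C3.GP A ([y] ++ C3.segf Q 2 (i - 1) ++ [Q 0] ++
              C3.segf Q (i + 1) (j - i) ++ [Q 1]) y (Q 1) :=
            gp3.append (C3.GP.single A (Q 1)) e2
          have gp : C3.GP A ([y] ++ C3.segf Q 2 (i - 1) ++ [Q 0] ++
              C3.segf Q (i + 1) (j - i) ++ [Q 1] ++ C3.segf Q (j + 1) (m - 1 - j))
              y (Q (j + 1 + (m - 1 - j - 1))) :=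
            gp4.append (C3.GP.segf' harc (j + 1) (by omega)) g2
          have hclose : A (Q (j + 1 + (m - 1 - j - 1))) y := by
            rw [show j + 1 + (m - 1 - j - 1) = m - 1 by omega]; exact hmy'
          refine C3.false_of_GP hlongest gp hclose ?_ ?_ ?_
          · refine C3.nodup_append' (C3.nodup_append' (C3.nodup_append'
              (C3.nodup_append' (C3.nodup_append'
                (List.nodup_singleton y) (snod _ (by omega)) ?_)
                (List.nodup_singleton (Q 0)) ?_)
                (snod _ (by omega)) ?_)
                (List.nodup_singleton (Q 1)) ?_)
                (snod _ (by omega)) ?_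
            · intro x hx
              rw [List.mem_singleton] at hx
              subst hx
              exact hyseg _ _
            · intro x hx
              simp only [List.mem_append, List.mem_singleton, C3.mem_segf] at hx
              simp only [List.mem_singleton]
              rcases hx with rfl | ⟨j1, hj1, rfl⟩
              · exact hyQ 0
              · intro h
                have := hQinj (by omega) (by omega) h
                omega
            · intro x hx
              simp only [List.mem_append, List.mem_singleton, C3.mem_segf] at hx
              rcases hx with (rfl | ⟨j1, hj1, rfl⟩) | rfl
              · exact hyseg _ _
              · exact hsegdisj (by omega) (by omega) _ (C3.mem_segf.2 ⟨j1, hj1, rfl⟩)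
              · exact hccseg (by omega) (by omega)
            · intro x hx
              simp only [List.mem_append, List.mem_singleton, C3.mem_segf] at hx
              simp only [List.mem_singleton]
              rcases hx with ((rfl | ⟨j1, hj1, rfl⟩) | rfl) | ⟨j1, hj1, rfl⟩
              · exact hyQ 1
              · intro h
                have := hQinj (by omega) (by omega) h
                omega
              · intro h
                have := hQinj (by omega) (by omega) h
                omega
              · intro h
                have := hQinj (by omega) (by omega) h
                omega
            · intro x hx
              simp only [List.mem_append, List.mem_singleton, C3.mem_segf] at hx
              rcases hx with (((rfl | ⟨j1, hj1, rfl⟩) | rfl) | ⟨j1, hj1, rfl⟩) | rfl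
              · exact hyseg _ _
              · exact hsegdisj (by omega) (by omega) _ (C3.mem_segf.2 ⟨j1, hj1, rfl⟩)
              · exact hccseg (by omega) (by omega)
              · exact hsegdisj (by omega) (by omega) _ (C3.mem_segf.2 ⟨j1, hj1, rfl⟩)
              · exact hccseg (by omega) (by omega)
          · simp only [List.length_append, C3.segf_length, List.length_singleton,
              List.length_cons, List.length_nil]; omega
          · simp only [List.length_append, C3.segf_length, List.length_singleton,
              List.length_cons, List.length_nil]; omega
        · -- i = j
          subst hij
          have gp1 : C3.GP A ([y] ++ C3.segf Q 2 (i - 1)) y (Q (2 + (i - 1 - 1))) :=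
            (C3.GP.single A y).append (C3.GP.segf' harc 2 (by omega)) hyγ2
          have e1 : A (Q (2 + (i - 1 - 1))) (Q 0) := by
            rw [show 2 + (i - 1 - 1) = i by omega]; exact hAi1
          have gp2 : C3.GP A ([y] ++ C3.segf Q 2 (i - 1) ++ [Q 0]) y (Q 0) :=
            gp1.append (C3.GP.single A (Q 0)) e1
          have e2 : A (Q 0) (Q 1) := harc 0
          have gp3 : C3.GP A ([y] ++ C3.segf Q 2 (i - 1) ++ [Q 0] ++ [Q 1]) y (Q 1) :=
            gp2.append (C3.GP.single A (Q 1)) e2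
          have gp : C3.GP A ([y] ++ C3.segf Q 2 (i - 1) ++ [Q 0] ++ [Q 1] ++
              C3.segf Q (i + 1) (m - 1 - i)) y (Q (i + 1 + (m - 1 - i - 1))) :=
            gp3.append (C3.GP.segf' harc (i + 1) (by omega)) g2
          have hclose : A (Q (i + 1 + (m - 1 - i - 1))) y := by
            rw [show i + 1 + (m - 1 - i - 1) = m - 1 by omega]; exact hmy'
          refine C3.false_of_GP hlongest gp hclose ?_ ?_ ?_
          · refine C3.nodup_append' (C3.nodup_append' (C3.nodup_append'
              (C3.nodup_append'
                (List.nodup_singleton y) (snod _ (by omega)) ?_)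
                (List.nodup_singleton (Q 0)) ?_)
                (List.nodup_singleton (Q 1)) ?_)
                (snod _ (by omega)) ?_
            · intro x hx
              rw [List.mem_singleton] at hx
              subst hx
              exact hyseg _ _
            · intro x hx
              simp only [List.mem_append, List.mem_singleton, C3.mem_segf] at hx
              simp only [List.mem_singleton]
              rcases hx with rfl | ⟨j1, hj1, rfl⟩
              · exact hyQ 0
              · intro h
                have := hQinj (by omega) (by omega) h
                omega
            · intro x hx
              simp only [List.mem_append, List.mem_singleton, C3.mem_segf] at hx
              simp only [List.mem_singleton]
              rcases hx with (rfl | ⟨j1, hj1, rfl⟩) | rfl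
              · exact hyQ 1
              · intro h
                have := hQinj (by omega) (by omega) h
                omega
              · intro h
                have := hQinj (by omega) (by omega) h
                omega
            · intro x hx
              simp only [List.mem_append, List.mem_singleton, C3.mem_segf] at hx
              rcases hx with ((rfl | ⟨j1, hj1, rfl⟩) | rfl) | rfl
              · exact hyseg _ _
              · exact hsegdisj (by omega) (by omega) _ (C3.mem_segf.2 ⟨j1, hj1, rfl⟩)
              · exact hccseg (by omega) (by omega)
              · exact hccseg (by omega) (by omega)
          · simp only [List.length_append, C3.segf_length, List.length_singleton,
              List.length_cons, List.length_nil]; omega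
          · simp only [List.length_append, C3.segf_length, List.length_singleton,
              List.length_cons, List.length_nil]; omega
        · -- j < i
          have gp1 : C3.GP A ([y] ++ C3.segf Q 2 (j - 1)) y (Q (2 + (j - 1 - 1))) :=
            (C3.GP.single A y).append (C3.GP.segf' harc 2 (by omega)) hyγ2
          have e1 : A (Q (2 + (j - 1 - 1))) (Q 1) := by
            rw [show 2 + (j - 1 - 1) = j by omega]; exact g1
          have gp2 : C3.GP A ([y] ++ C3.segf Q 2 (j - 1) ++ [Q 1]) y (Q 1) :=
            gp1.append (C3.GP.single A (Q 1)) e1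
          have gp3 : C3.GP A ([y] ++ C3.segf Q 2 (j - 1) ++ [Q 1] ++
              C3.segf Q (j + 1) (i - j)) y (Q (j + 1 + (i - j - 1))) :=
            gp2.append (C3.GP.segf' harc (j + 1) (by omega)) g2
          have e2 : A (Q (j + 1 + (i - j - 1))) (Q 0) := by
            rw [show j + 1 + (i - j - 1) = i by omega]; exact hAi1
          have gp4 : C3.GP A ([y] ++ C3.segf Q 2 (j - 1) ++ [Q 1] ++
              C3.segf Q (j + 1) (i - j) ++ [Q 0]) y (Q 0) :=
            gp3.append (C3.GP.single A (Q 0)) e2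
          have gp : C3.GP A ([y] ++ C3.segf Q 2 (j - 1) ++ [Q 1] ++
              C3.segf Q (j + 1) (i - j) ++ [Q 0] ++ C3.segf Q (i + 1) (m - 1 - i))
              y (Q (i + 1 + (m - 1 - i - 1))) :=
            gp4.append (C3.GP.segf' harc (i + 1) (by omega)) hAi2
          have hclose : A (Q (i + 1 + (m - 1 - i - 1))) y := by
            rw [show i + 1 + (m - 1 - i - 1) = m - 1 by omega]; exact hmy'
          refine C3.false_of_GP hlongest gp hclose ?_ ?_ ?_
          · refine C3.nodup_append' (C3.nodup_append' (C3.nodup_append'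
              (C3.nodup_append' (C3.nodup_append'
                (List.nodup_singleton y) (snod _ (by omega)) ?_)
                (List.nodup_singleton (Q 1)) ?_)
                (snod _ (by omega)) ?_)
                (List.nodup_singleton (Q 0)) ?_)
                (snod _ (by omega)) ?_
            · intro x hx
              rw [List.mem_singleton] at hx
              subst hx
              exact hyseg _ _
            · intro x hx
              simp only [List.mem_append, List.mem_singleton, C3.mem_segf] at hx
              simp only [List.mem_singleton]
              rcases hx with rfl | ⟨j1, hj1, rfl⟩
              · exact hyQ 1
              · intro h
                have := hQinj (by omega) (by omega) h
                omega
            · intro x hx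
              simp only [List.mem_append, List.mem_singleton, C3.mem_segf] at hx
              rcases hx with (rfl | ⟨j1, hj1, rfl⟩) | rfl
              · exact hyseg _ _
              · exact hsegdisj (by omega) (by omega) _ (C3.mem_segf.2 ⟨j1, hj1, rfl⟩)
              · exact hccseg (by omega) (by omega)
            · intro x hx
              simp only [List.mem_append, List.mem_singleton, C3.mem_segf] at hx
              simp only [List.mem_singleton]
              rcases hx with ((rfl | ⟨j1, hj1, rfl⟩) | rfl) | ⟨j1, hj1, rfl⟩
              · exact hyQ 0
              · intro h
                have := hQinj (by omega) (by omega) h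
                omega
              · intro h
                have := hQinj (by omega) (by omega) h
                omega
              · intro h
                have := hQinj (by omega) (by omega) h
                omega
            · intro x hx
              simp only [List.mem_append, List.mem_singleton, C3.mem_segf] at hx
              rcases hx with (((rfl | ⟨j1, hj1, rfl⟩) | rfl) | ⟨j1, hj1, rfl⟩) | rfl
              · exact hyseg _ _
              · exact hsegdisj (by omega) (by omega) _ (C3.mem_segf.2 ⟨j1, hj1, rfl⟩)
              · exact hccseg (by omega) (by omega)
              · exact hsegdisj (by omega) (by omega) _ (C3.mem_segf.2 ⟨j1, hj1, rfl⟩)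
              · exact hccseg (by omega) (by omega)
          · simp only [List.length_append, C3.segf_length, List.length_singleton,
              List.length_cons, List.length_nil]; omega
          · simp only [List.length_append, C3.segf_length, List.length_singleton,
              List.length_cons, List.length_nil]; omega
      -- now use the pair (y, x₂)
      have forbC : ∀ r : V, (∀ s, r ≠ Q s) → r ≠ y → A y r → A r (Q 1) → False := by
        intro r hr hry h1 h2
        have gp1 : C3.GP A (C3.segf Q 1 (m - 1)) (Q 1) (Q (1 + (m - 1 - 1))) :=
          C3.GP.segf' harc 1 (by omega)
        have e1 : A (Q (1 + (m - 1 - 1))) y := by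
          rw [show 1 + (m - 1 - 1) = m - 1 by omega]; exact hmy'
        have gp2 : C3.GP A (C3.segf Q 1 (m - 1) ++ [y]) (Q 1) y :=
          gp1.append (C3.GP.single A y) e1
        have gp : C3.GP A (C3.segf Q 1 (m - 1) ++ [y] ++ [r]) (Q 1) r :=
          gp2.append (C3.GP.single A r) h1
        refine C3.false_of_GP hlongest gp h2 ?_ ?_ ?_
        · refine C3.nodup_append' (C3.nodup_append' (snod _ (by omega))
            (List.nodup_singleton y) ?_) (List.nodup_singleton r) ?_
          · intro x hx
            simp only [List.mem_singleton]
            rw [C3.mem_segf] at hx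
            obtain ⟨j, _, rfl⟩ := hx
            exact (hyQ _).symm
          · intro x hx
            simp only [List.mem_append, List.mem_singleton, C3.mem_segf] at hx
            simp only [List.mem_singleton]
            rcases hx with ⟨j, _, rfl⟩ | rfl
            · exact (hr _).symm
            · exact hry.symm
        · simp only [List.length_append, C3.segf_length, List.length_singleton,
            List.length_cons, List.length_nil]; omega
        · simp only [List.length_append, C3.segf_length, List.length_singleton,
            List.length_cons, List.length_nil]; omega
      have forbD : ∀ r : V, (∀ s, r ≠ Q s) → r ≠ y → A (Q 1) r → A r y → False := by
        intro r hr hry h1 h2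
        have gp1 : C3.GP A ([y] ++ C3.segf Q 2 (m - 2)) y (Q (2 + (m - 2 - 1))) :=
          (C3.GP.single A y).append (C3.GP.segf' harc 2 (by omega)) hyγ2
        have e1 : A (Q (2 + (m - 2 - 1))) (Q 0) := by
          rw [show 2 + (m - 2 - 1) = m - 1 by omega]; exact harcm
        have gp2 : C3.GP A ([y] ++ C3.segf Q 2 (m - 2) ++ [Q 0]) y (Q 0) :=
          gp1.append (C3.GP.single A (Q 0)) e1
        have gp3 : C3.GP A ([y] ++ C3.segf Q 2 (m - 2) ++ [Q 0] ++ [Q 1]) y (Q 1) :=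
          gp2.append (C3.GP.single A (Q 1)) (harc 0)
        have gp : C3.GP A ([y] ++ C3.segf Q 2 (m - 2) ++ [Q 0] ++ [Q 1] ++ [r]) y r :=
          gp3.append (C3.GP.single A r) h1
        refine C3.false_of_GP hlongest gp h2 ?_ ?_ ?_
        · refine C3.nodup_append' (C3.nodup_append' (C3.nodup_append'
            (C3.nodup_append'
              (List.nodup_singleton y) (snod _ (by omega)) ?_)
              (List.nodup_singleton (Q 0)) ?_)
              (List.nodup_singleton (Q 1)) ?_)
              (List.nodup_singleton r) ?_
          · intro x hx
            rw [List.mem_singleton] at hx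
            subst hx
            exact hyseg _ _
          · intro x hx
            simp only [List.mem_append, List.mem_singleton, C3.mem_segf] at hx
            simp only [List.mem_singleton]
            rcases hx with rfl | ⟨j1, hj1, rfl⟩
            · exact hyQ 0
            · intro h
              have := hQinj (by omega) (by omega) h
              omega
          · intro x hx
            simp only [List.mem_append, List.mem_singleton, C3.mem_segf] at hx
            simp only [List.mem_singleton]
            rcases hx with (rfl | ⟨j1, hj1, rfl⟩) | rfl
            · exact hyQ 1
            · intro h
              have := hQinj (by omega) (by omega) h
              omega
            · intro h
              have := hQinj (by omega) (by omega) h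
              omega
          · intro x hx
            simp only [List.mem_append, List.mem_singleton, C3.mem_segf] at hx
            simp only [List.mem_singleton]
            rcases hx with ((rfl | ⟨j1, hj1, rfl⟩) | rfl) | rfl
            · exact hry.symm
            · exact (hr _).symm
            · exact (hr _).symm
            · exact (hr _).symm
        · simp only [List.length_append, C3.segf_length, List.length_singleton,
            List.length_cons, List.length_nil]; omega
        · simp only [List.length_append, C3.segf_length, List.length_singleton,
            List.length_cons, List.length_nil]; omega
      have harc12 : A (Q 1) (Q 2) := harc 1
      have hdeg : 2 * n - 1 ≤ deg A y + deg A (Q 1) :=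
        (hcond y (Q 1) (hyQ 1) (hno' 1 (by omega)).1 (hno' 1 (by omega)).2
          ⟨Q 2, Or.inl ⟨hyγ2, harc12⟩⟩).2
      have hyB := C3.ybound2 A hm0 c y hm1 (fun t h => ruleY t h.1 h.2)
        (hno' 0 (by omega)).2 (hno' 1 (by omega)).1
      have hgB := C3.gbound A hm0 c hirr hcinj 1 2 (by omega) (by omega) hJ1
      exact C3.final_count A hm0 c hirr hn hn6 hcinj y hyQ 1
        (hno' 1 (by omega)).1 (hno' 1 (by omega)).2 hdeg (m - 1) (m + 1) (by omega)
        hyB (hgB.trans (by omega))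
        (fun r hry hr => ⟨fun h => forbC r hr hry h.1 h.2,
          fun h => forbD r hr hry h.1 h.2⟩)
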